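/- A problem f :⊆ ℕ^ℕ ⇉ ℕ^ℕ has a computable realizer if and only if Player II has a computable winning strategy in the Wadge game of f (i.e., a winning strategy σ : List (List ℕ) → List ℕ that is a computable function in the standard sense via encodings). -/

import Mathlib

noncomputable section

/-- Baire space `ℕ^ℕ`. -/
abbrev Baire : Type := ℕ → ℕ

/-- The Cantor pairing `⟨n,k⟩ = (n+k)(n+k+1)/2 + k`. -/
def cpair (n k : ℕ) : ℕ := (n + k) * (n + k + 1) / 2 + k

/-- The inverse of the Cantor pairing. -/
noncomputable def cunpair (m : ℕ) : ℕ × ℕ :=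
  Classical.epsilon fun x : ℕ × ℕ => cpair x.1 x.2 = m

/-- A fixed bijective numbering `w : ℕ → List ℕ` of finite words. -/
def word (n : ℕ) : List ℕ := Denumerable.ofNat (List ℕ) n

/-- `l` is a finite prefix of the infinite sequence `p`. -/
def IsPrefixOf (l : List ℕ) (p : Baire) : Prop := l = (List.range l.length).map p

/-- Two words are comparable in the prefix order. -/
def WordComparable (u v : List ℕ) : Prop := u <+: v ∨ v <+: u

/-- The word `w(n_i)` decoded from the `i`-th entry of the code `q`. -/
noncomputable def wn (q : Baire) (i : ℕ) : List ℕ := word (cunpair (q i)).1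

/-- The word `w(k_i)` decoded from the `i`-th entry of the code `q`. -/
noncomputable def wk (q : Baire) (i : ℕ) : List ℕ := word (cunpair (q i)).2

/-- The code `q` is consistent. -/
def ConsistentCode (q : Baire) : Prop :=
  ∀ i j, WordComparable (wn q i) (wn q j) → WordComparable (wk q i) (wk q j)

/-- The continuous partial function `Φ_q :⊆ ℕ^ℕ → ℕ^ℕ` coded by `q`. -/
noncomputable def Phi (q : Baire) : Baire →. Baire := fun p =>
  ⟨ConsistentCode q ∧ ∀ m : ℕ, ∃ i, IsPrefixOf (wn q i) p ∧ m < (wk q i).length,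
   fun _ => Classical.epsilon fun x : Baire =>
      ∀ i, IsPrefixOf (wn q i) p → IsPrefixOf (wk q i) x⟩

/-- The pairing `⟨q,p⟩` on Baire space. -/
def bpair (q p : Baire) : Baire := fun n => if n % 2 = 0 then q (n / 2) else p (n / 2)

/-- Even part of a sequence. -/
def evens (r : Baire) : Baire := fun n => r (2 * n)

/-- Odd part of a sequence. -/
def odds (r : Baire) : Baire := fun n => r (2 * n + 1)

/-- The universal function `U(⟨q,p⟩) = Φ_q(p)`. -/
noncomputable def U : Baire →. Baire := fun r => Phi (evens r) (odds r)

/-- `h` is monotone for the prefix order. -/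
def MonotoneWord (h : List ℕ → List ℕ) : Prop := ∀ u v, u <+: v → h u <+: h v

/-- `h` approximates the partial function `F`. -/
def Approximates (h : List ℕ → List ℕ) (F : Baire →. Baire) : Prop :=
  ∀ p, ∀ hp : (F p).Dom,
    (∀ v, IsPrefixOf v p → IsPrefixOf (h v) ((F p).get hp)) ∧
    (∀ m : ℕ, ∃ v, IsPrefixOf v p ∧ m < (h v).length)

/-- `F :⊆ ℕ^ℕ → ℕ^ℕ` is continuous: some monotone word function approximates it. -/
def ContinuousPF (F : Baire →. Baire) : Prop := ∃ h, MonotoneWord h ∧ Approximates h F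

/-- `F :⊆ ℕ^ℕ → ℕ^ℕ` is computable: some computable monotone word function approximates it. -/
def ComputablePF (F : Baire →. Baire) : Prop :=
  ∃ h, Computable h ∧ MonotoneWord h ∧ Approximates h F

/-- A total function is computable iff it is computable as a partial function with full domain. -/
def ComputableTotal (F : Baire → Baire) : Prop := ComputablePF fun p => Part.some (F p)

/-- A problem (multivalued function on Baire space). -/
abbrev Problem : Type := Baire → Set Baire

/-- `F` is a realizer of the problem `f`. -/
def Realizes (F : Baire →. Baire) (f : Problem) : Prop :=
  ∀ p, (f p).Nonempty → ∃ h : (F p).Dom, (F p).get h ∈ f p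

/-- `f` is continuous: it has a continuous realizer. -/
def ContinuousProblem (f : Problem) : Prop := ∃ F, ContinuousPF F ∧ Realizes F f

/-- The discontinuity problem `DIS`. -/
noncomputable def DIS : Problem := fun p => {q | q ∉ U p}

/-- `D` is a discontinuity function for `f`. -/
def DiscontinuityFunction (D : Baire → Baire) (f : Problem) : Prop :=
  ∀ q, (f (D q)).Nonempty ∧ ∀ y ∈ Phi q (D q), y ∉ f (D q)

/-- `f` is computably discontinuous. -/
def ComputablyDiscontinuous (f : Problem) : Prop :=
  ∃ D, ComputableTotal D ∧ DiscontinuityFunction D f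

/-- `f` is effectively discontinuous. -/
def EffectivelyDiscontinuous (f : Problem) : Prop :=
  ∃ D : Baire → Baire, Continuous D ∧ DiscontinuityFunction D f

/-- Weihrauch reducibility `f ≤_W g`. -/
def WeihrauchRed (f g : Problem) : Prop :=
  ∃ H K : Baire →. Baire, ComputablePF H ∧ ComputablePF K ∧
    ∀ G : Baire →. Baire, Realizes G g →
      Realizes (fun p => (K p).bind fun s => (G s).bind fun t => H (bpair p t)) f

/-- Strong Weihrauch reducibility `f ≤_sW g`. -/
def StrongWeihrauchRed (f g : Problem) : Prop :=
  ∃ H K : Baire →. Baire, ComputablePF H ∧ ComputablePF K ∧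
    ∀ G : Baire →. Baire, Realizes G g →
      Realizes (fun p => (K p).bind fun s => (G s).bind fun t => H t) f

/-- Continuous Weihrauch reducibility `f ≤*_W g`. -/
def ContWeihrauchRed (f g : Problem) : Prop :=
  ∃ H K : Baire →. Baire, ContinuousPF H ∧ ContinuousPF K ∧
    ∀ G : Baire →. Baire, Realizes G g →
      Realizes (fun p => (K p).bind fun s => (G s).bind fun t => H (bpair p t)) f

/-- Continuous strong Weihrauch reducibility `f ≤*_sW g`. -/
def ContStrongWeihrauchRed (f g : Problem) : Prop :=
  ∃ H K : Baire →. Baire, ContinuousPF H ∧ ContinuousPF K ∧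
    ∀ G : Baire →. Baire, Realizes G g →
      Realizes (fun p => (K p).bind fun s => (G s).bind fun t => H t) f

/-- Concatenation of the first `n` moves. -/
def concatN (ms : ℕ → List ℕ) (n : ℕ) : List ℕ := ((List.range n).map ms).flatten

/-- The concatenated play is infinite. -/
def PlayInf (ms : ℕ → List ℕ) : Prop := ∀ m : ℕ, ∃ n, m < (concatN ms n).length

/-- The infinite sequence determined by an infinite play. -/
noncomputable def playLim (ms : ℕ → List ℕ) : Baire :=
  Classical.epsilon fun p : Baire => ∀ n, IsPrefixOf (concatN ms n) p

/-- Player II wins the run of the Wadge game of `f` given by the moves `xs` of I and `ys` of II. -/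
def WadgeIIWins (f : Problem) (xs ys : ℕ → List ℕ) : Prop :=
  (PlayInf xs ∧ (f (playLim xs)).Nonempty) → (PlayInf ys ∧ playLim ys ∈ f (playLim xs))

/-- The list of first `n` moves. -/
def histW (xs : ℕ → List ℕ) (n : ℕ) : List (List ℕ) := (List.range n).map xs

/-- `σ` is a winning strategy for Player II in the Wadge game of `f`. -/
def WadgeWinningII (f : Problem) (σ : List (List ℕ) → List ℕ) : Prop :=
  ∀ xs : ℕ → List ℕ, WadgeIIWins f xs fun i => σ (histW xs (i + 1))

/-- `σ` is a winning strategy for Player I in the Wadge game of `f`. -/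
def WadgeWinningI (f : Problem) (σ : List (List ℕ) → List ℕ) : Prop :=
  ∀ ys : ℕ → List ℕ, ¬ WadgeIIWins f (fun i => σ (histW ys i)) ys

/-- The list of first `n` values of a sequence. -/
def histN (x : Baire) (n : ℕ) : List ℕ := (List.range n).map x

/-- Player II wins the run `(x,y)` of the Lipschitz game of `f`. -/
def LipIIWins (f : Problem) (x y : Baire) : Prop := (f x).Nonempty → y ∈ f x

/-- `σ` is a winning strategy for Player II in the Lipschitz game of `f`. -/
def LipWinningII (f : Problem) (σ : List ℕ → ℕ) : Prop :=
  ∀ x : Baire, LipIIWins f x fun i => σ (histN x (i + 1))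

/-- `σ` is a winning strategy for Player I in the Lipschitz game of `f`. -/
def LipWinningI (f : Problem) (σ : List ℕ → ℕ) : Prop :=
  ∀ y : Baire, ¬ LipIIWins f (fun i => σ (histN y i)) y

/-- `σ` is a winning strategy for Player II in the Gale–Stewart game `A`. -/
def GSWinningII (A : Set Baire) (σ : List ℕ → ℕ) : Prop :=
  ∀ x : Baire, bpair x (fun i => σ (histN x (i + 1))) ∈ A

/-- `σ` is a winning strategy for Player I in the Gale–Stewart game `A`. -/
def GSWinningI (A : Set Baire) (σ : List ℕ → ℕ) : Prop :=
  ∀ y : Baire, bpair (fun i => σ (histN y i)) y ∉ A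

/-- The totalization `Tf` of `f`. -/
def Totalization (f : Problem) : Problem := fun p => {q | (f p).Nonempty → q ∈ f p}

/-- The paired graph `⟨graph(Tf)⟩ ⊆ ℕ^ℕ`. -/
def pairedGraph (f : Problem) : Set Baire :=
  {r | ∃ x y : Baire, r = bpair x y ∧ y ∈ Totalization f x}

/-- Domain of the word concatenation map `w*`. -/
def wstarDom (p : Baire) : Prop := PlayInf fun i => word (p i)

/-- The word concatenation map `w* : p ↦ w(p 0) w(p 1) ⋯` (on its domain). -/
noncomputable def wstar (p : Baire) : Baire := playLim fun i => word (p i)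

/-- The problem `f^w = w*⁻¹ ∘ f ∘ w*`. -/
noncomputable def wordLift (f : Problem) : Problem := fun p =>
  {q | wstarDom p ∧ (f (wstar p)).Nonempty ∧ wstarDom q ∧ wstar q ∈ f (wstar p)}

/-- The `i`-th component of a tupled sequence. -/
def tupleComp (p : Baire) (i : ℕ) : Baire := fun n => p (cpair i n)

/-- The parallelization `⟨f⟩` of `f`. -/
def Parallelization (f : Problem) : Problem := fun p =>
  {q | ∀ i, tupleComp q i ∈ f (tupleComp p i)}

/-- Turing reducibility: `p` is computable relative to the oracle `q`. -/
def TuringLe (p q : Baire) : Prop := ∃ F : Baire →. Baire, ComputablePF F ∧ p ∈ F q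

end

section AuxPrefix

lemma isPrefixOf_iff {l : List ℕ} {p : Baire} :
    IsPrefixOf l p ↔ ∀ j, j < l.length → l[j]? = some (p j) := by
  constructor
  · intro h j hj
    conv_lhs => rw [h]
    simp [hj]
  · intro h
    refine List.ext_getElem? fun j => ?_
    rcases lt_or_ge j l.length with hj | hj
    · rw [h j hj, List.getElem?_eq_getElem (by simpa using hj)]
      simp
    · rw [List.getElem?_eq_none hj, List.getElem?_eq_none (by simpa using hj)]

lemma isPrefixOf_nil (p : Baire) : IsPrefixOf [] p := by simp [IsPrefixOf]

lemma IsPrefixOf.getD_eq {l : List ℕ} {p : Baire} (h : IsPrefixOf l p) {j : ℕ}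
    (hj : j < l.length) : l.getD j 0 = p j := by
  rw [List.getD_eq_getElem?_getD, isPrefixOf_iff.1 h j hj]; rfl

lemma isPrefixOf_map_range (p : Baire) (n : ℕ) : IsPrefixOf ((List.range n).map p) p := by
  simp [IsPrefixOf]

lemma IsPrefixOf.of_prefix {u v : List ℕ} {p : Baire} (huv : u <+: v) (h : IsPrefixOf v p) :
    IsPrefixOf u p := by
  rw [isPrefixOf_iff]
  intro j hj
  rw [List.getElem?_eq_getElem hj, huv.getElem hj, ← List.getElem?_eq_getElem]
  exact isPrefixOf_iff.1 h j (lt_of_lt_of_le hj huv.length_le)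

lemma prefix_of_isPrefixOf {u v : List ℕ} {p : Baire} (hu : IsPrefixOf u p)
    (hv : IsPrefixOf v p) (hle : u.length ≤ v.length) : u <+: v := by
  rw [List.prefix_iff_eq_take]
  conv_rhs => rw [hv]
  rw [← List.map_take, List.take_range, min_eq_left (by simpa using hle)]
  exact hu

lemma concatN_zero (ms : ℕ → List ℕ) : concatN ms 0 = [] := rfl

lemma concatN_succ (ms : ℕ → List ℕ) (n : ℕ) :
    concatN ms (n + 1) = concatN ms n ++ ms n := by
  simp [concatN, List.range_succ]

lemma concatN_mono {ms : ℕ → List ℕ} {m n : ℕ} (h : m ≤ n) :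
    concatN ms m <+: concatN ms n := by
  induction h with
  | refl => exact List.prefix_refl _
  | step _ ih => rename_i k _; rw [concatN_succ]; exact ih.trans (List.prefix_append _ _)

lemma concatN_congr {ms ms' : ℕ → List ℕ} {n : ℕ} (h : ∀ i < n, ms i = ms' i) :
    concatN ms n = concatN ms' n := by
  unfold concatN
  congr 1
  exact List.map_congr_left fun i hi => h i (List.mem_range.1 hi)

lemma exists_limit {ms : ℕ → List ℕ} (h : PlayInf ms) :
    ∃ p : Baire, ∀ n, IsPrefixOf (concatN ms n) p := by
  refine ⟨fun m => (concatN ms (Nat.find (h m))).getD m 0, fun n => ?_⟩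
  rw [isPrefixOf_iff]
  intro j hj
  have hj2 : j < (concatN ms (Nat.find (h j))).length := Nat.find_spec (h j)
  rw [List.getElem?_eq_getElem hj, List.getD_eq_getElem _ _ hj2]
  rcases le_total n (Nat.find (h j)) with hle | hle
  · rw [(concatN_mono (ms := ms) hle).getElem hj]
  · rw [(concatN_mono (ms := ms) hle).getElem hj2]

lemma playLim_spec {ms : ℕ → List ℕ} (h : PlayInf ms) (n : ℕ) :
    IsPrefixOf (concatN ms n) (playLim ms) :=
  Classical.epsilon_spec (exists_limit h) n

lemma playLim_eq {ms : ℕ → List ℕ} {p : Baire} (h : PlayInf ms)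
    (hp : ∀ n, IsPrefixOf (concatN ms n) p) : playLim ms = p := by
  funext m
  obtain ⟨n, hn⟩ := h m
  have h1 := isPrefixOf_iff.1 (playLim_spec h n) m hn
  have h2 := isPrefixOf_iff.1 (hp n) m hn
  exact Option.some_injective _ (h1.symm.trans h2)

lemma concatN_single (p : Baire) (n : ℕ) :
    concatN (fun i => [p i]) n = (List.range n).map p := by
  induction n with
  | zero => rfl
  | succ k ih => rw [concatN_succ, ih, List.range_succ, List.map_append]; rfl

lemma playInf_single (p : Baire) : PlayInf fun i => [p i] := by
  intro m
  exact ⟨m + 1, by rw [concatN_single]; simpa using Nat.lt_succ_self m⟩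

lemma playLim_single (p : Baire) : playLim (fun i => [p i]) = p :=
  playLim_eq (playInf_single p) fun n => by
    rw [concatN_single]; exact isPrefixOf_map_range p n

lemma histW_flatten (xs : ℕ → List ℕ) (n : ℕ) : (histW xs n).flatten = concatN xs n := rfl

lemma histW_length (xs : ℕ → List ℕ) (n : ℕ) : (histW xs n).length = n := by
  simp [histW]

lemma histW_succ_dropLast (xs : ℕ → List ℕ) (n : ℕ) :
    (histW xs (n + 1)).dropLast = histW xs n := by
  simp [histW, List.range_succ, List.dropLast_concat]

end AuxPrefix

section AuxMp

/-- Strategy for player II induced by a monotone word function `h`. -/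
def stratOf (h : List ℕ → List ℕ) : List (List ℕ) → List ℕ := fun l =>
  (h l.flatten).drop (if l.length ≤ 1 then 0 else (h l.dropLast.flatten).length)

lemma primrec_list_drop : Primrec₂ fun (l : List ℕ) (n : ℕ) => l.drop n := by
  have h : Primrec₂ fun (l : List ℕ) (n : ℕ) =>
      Nat.rec (motive := fun _ => List ℕ) l (fun _ ih => ih.tail) n :=
    Primrec.nat_rec' Primrec.snd Primrec.fst
      ((Primrec.list_tail.comp (Primrec.snd.comp Primrec.snd)).to₂)
  refine h.of_eq fun l n => ?_
  induction n with
  | zero => rfl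
  | succ k ih => rw [← List.tail_drop]; exact congrArg List.tail ih.symm |>.symm

lemma dropLast_eq_reverse {α : Type*} (l : List α) : l.reverse.tail.reverse = l.dropLast := by
  induction l using List.reverseRecOn with
  | nil => rfl
  | append_singleton l a ih => simp

lemma primrec_list_dropLast {α : Type*} [Primcodable α] : Primrec (List.dropLast : List α → List α) :=
  ((Primrec.list_reverse.comp (Primrec.list_tail.comp Primrec.list_reverse))).of_eq
    dropLast_eq_reverse

lemma computable_stratOf {h : List ℕ → List ℕ} (hc : Computable h) :
    Computable (stratOf h) := by
  have c1 : Computable fun l : List (List ℕ) => h l.flatten :=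
    hc.comp Primrec.list_flatten.to_comp
  have c2 : Computable fun l : List (List ℕ) => (h l.dropLast.flatten).length :=
    Primrec.list_length.to_comp.comp
      (hc.comp ((Primrec.list_flatten.comp primrec_list_dropLast).to_comp))
  have cbool : Computable fun l : List (List ℕ) => decide (l.length ≤ 1) :=
    (Primrec.nat_le.comp Primrec.list_length (Primrec.const 1)).decide.to_comp
  have c3 : Computable fun l : List (List ℕ) =>
      (if l.length ≤ 1 then 0 else (h l.dropLast.flatten).length) := by
    have := Computable.cond cbool (Computable.const 0) c2
    exact this.of_eq fun l => by rw [Bool.cond_decide]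
  exact primrec_list_drop.to_comp.comp c1 c3

lemma stratOf_telescope {h : List ℕ → List ℕ} (hm : MonotoneWord h) (xs : ℕ → List ℕ) :
    ∀ n, concatN (fun i => stratOf h (histW xs (i + 1))) (n + 1) = h (concatN xs (n + 1)) := by
  intro n
  induction n with
  | zero =>
    rw [concatN_succ, concatN_zero, List.nil_append]
    show stratOf h (histW xs 1) = _
    have h1 : (histW xs 1).length = 1 := histW_length xs 1
    unfold stratOf
    rw [h1, if_pos le_rfl, List.drop_zero, histW_flatten]
  | succ k ih =>
    rw [concatN_succ, ih]
    show h (concatN xs (k + 1)) ++ stratOf h (histW xs (k + 2)) = _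
    unfold stratOf
    rw [histW_length, if_neg (by omega), histW_succ_dropLast, histW_flatten, histW_flatten]
    obtain ⟨t, ht⟩ := hm _ _ (concatN_mono (ms := xs) (Nat.le_succ (k + 1)))
    rw [← ht, List.drop_left]

lemma wadge_of_computable {f : Problem}
    (hF : ∃ F : Baire →. Baire, ComputablePF F ∧ Realizes F f) :
    ∃ σ : List (List ℕ) → List ℕ, Computable σ ∧ WadgeWinningII f σ := by
  obtain ⟨F, ⟨h, hc, hm, ha⟩, hr⟩ := hF
  refine ⟨stratOf h, computable_stratOf hc, ?_⟩
  intro xs ⟨hxinf, hne⟩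
  set p := playLim xs with hp
  have hpre : ∀ n, IsPrefixOf (concatN xs n) p := playLim_spec hxinf
  obtain ⟨hdom, hmem⟩ := hr p hne
  obtain ⟨hp1, hp2⟩ := ha p hdom
  set ys := fun i => stratOf h (histW xs (i + 1)) with hys
  have htel : ∀ n, concatN ys (n + 1) = h (concatN xs (n + 1)) := stratOf_telescope hm xs
  have hyinf : PlayInf ys := by
    intro m
    obtain ⟨v, hvp, hvm⟩ := hp2 m
    obtain ⟨n, hn⟩ := hxinf v.length
    have hcomp : v <+: concatN xs n := prefix_of_isPrefixOf hvp (hpre n) (le_of_lt hn)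
    match n, hn, hcomp with
    | 0, hn, _ => exact absurd hn (by simp [concatN_zero])
    | (k+1), hn, hcomp =>
      refine ⟨k + 1, ?_⟩
      rw [htel k]
      exact lt_of_lt_of_le hvm (hm _ _ hcomp).length_le
  have hlim : playLim ys = (F p).get hdom := by
    refine playLim_eq hyinf fun n => ?_
    match n with
    | 0 => exact isPrefixOf_nil _
    | (k+1) => rw [htel k]; exact hp1 _ (hpre (k + 1))
  exact ⟨hyinf, hlim ▸ hmem⟩

end AuxMp

section AuxMpr

/-- Monotone word function induced by a strategy `σ` for player II. -/
def hOf (σ : List (List ℕ) → List ℕ) (v : List ℕ) : List ℕ :=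
  concatN (fun i => σ ((List.range (i + 1)).map fun j => [v.getD j 0])) v.length

lemma concatN_eq_rec (ms : ℕ → List ℕ) (n : ℕ) :
    Nat.rec (motive := fun _ => List ℕ) [] (fun k ih => ih ++ ms k) n = concatN ms n := by
  induction n with
  | zero => rfl
  | succ k ih => rw [concatN_succ, ← ih]

lemma computable_hOf {σ : List (List ℕ) → List ℕ} (hσ : Computable σ) :
    Computable (hOf σ) := by
  have hhist : Primrec₂ fun (v : List ℕ) (k : ℕ) =>
      (List.range (k + 1)).map fun j => [v.getD j 0] :=
    Primrec.list_map (Primrec.list_range.comp (Primrec.succ.comp Primrec.snd))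
      ((Primrec.list_cons.comp
        ((Primrec.list_getD 0).comp (Primrec.fst.comp Primrec.fst) Primrec.snd)
        (Primrec.const [])).to₂)
  have hstep : Computable₂ fun (v : List ℕ) (q : ℕ × List ℕ) =>
      q.2 ++ σ ((List.range (q.1 + 1)).map fun j => [v.getD j 0]) := by
    refine Primrec.list_append.to_comp.comp
      (Computable.snd.comp Computable.snd)
      (hσ.comp (hhist.to_comp.comp Computable.fst (Computable.fst.comp Computable.snd)))
  have := Computable.nat_rec (f := fun v : List ℕ => v.length)
    (g := fun _ : List ℕ => ([] : List ℕ)) Primrec.list_length.to_comp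
    (Computable.const []) hstep
  refine this.of_eq fun v => ?_
  unfold hOf
  exact concatN_eq_rec
    (fun k => σ ((List.range (k + 1)).map fun j => [v.getD j 0])) v.length

lemma getD_eq_of_prefix {u v : List ℕ} (huv : u <+: v) {j : ℕ} (hj : j < u.length) :
    u.getD j 0 = v.getD j 0 := by
  rw [List.getD_eq_getElem _ _ hj, List.getD_eq_getElem _ _ (lt_of_lt_of_le hj huv.length_le),
    huv.getElem hj]

lemma monotone_hOf (σ : List (List ℕ) → List ℕ) : MonotoneWord (hOf σ) := by
  intro u v huv
  unfold hOf
  have hagree : ∀ i < u.length,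
      σ ((List.range (i + 1)).map fun j => [u.getD j 0]) =
      σ ((List.range (i + 1)).map fun j => [v.getD j 0]) := by
    intro i hi
    congr 1
    refine List.map_congr_left fun j hj => ?_
    have hji : j < u.length := lt_of_lt_of_le (List.mem_range.1 hj) hi
    rw [getD_eq_of_prefix huv hji]
  rw [concatN_congr hagree]
  exact concatN_mono huv.length_le

lemma hOf_eq_of_isPrefixOf {σ : List (List ℕ) → List ℕ} {v : List ℕ} {p : Baire}
    (hv : IsPrefixOf v p) :
    hOf σ v = concatN (fun i => σ (histW (fun j => [p j]) (i + 1))) v.length := by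
  unfold hOf
  refine concatN_congr fun i hi => ?_
  congr 1
  unfold histW
  refine List.map_congr_left fun j hj => ?_
  rw [hv.getD_eq (lt_of_lt_of_le (List.mem_range.1 hj) hi)]

lemma histN_isPrefixOf (p : Baire) (n : ℕ) : IsPrefixOf (histN p n) p :=
  isPrefixOf_map_range p n

lemma computable_of_wadge {f : Problem}
    (hW : ∃ σ : List (List ℕ) → List ℕ, Computable σ ∧ WadgeWinningII f σ) :
    ∃ F : Baire →. Baire, ComputablePF F ∧ Realizes F f := by
  obtain ⟨σ, hσc, hσw⟩ := hW
  set ysp : Baire → ℕ → List ℕ := fun p i => σ (histW (fun j => [p j]) (i + 1)) with hysp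
  refine ⟨fun p => ⟨PlayInf (ysp p), fun _ => playLim (ysp p)⟩,
    ⟨hOf σ, computable_hOf hσc, monotone_hOf σ, ?_⟩, ?_⟩
  · -- Approximates
    intro p hp
    constructor
    · intro v hv
      rw [show (hOf σ) v = concatN (ysp p) v.length from hOf_eq_of_isPrefixOf hv]
      exact playLim_spec hp v.length
    · intro m
      obtain ⟨n, hn⟩ := hp m
      refine ⟨histN p n, histN_isPrefixOf p n, ?_⟩
      rw [show (hOf σ) (histN p n) = concatN (ysp p) (histN p n).length from
        hOf_eq_of_isPrefixOf (histN_isPrefixOf p n)]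
      simpa [histN] using hn
  · -- Realizes
    intro p hne
    have hxinf : PlayInf fun i => [p i] := playInf_single p
    have hlimx : playLim (fun i => [p i]) = p := playLim_single p
    obtain ⟨hyinf, hymem⟩ := hσw (fun j => [p j]) ⟨hxinf, by rw [hlimx]; exact hne⟩
    rw [hlimx] at hymem
    exact ⟨hyinf, hymem⟩

end AuxMpr


/-- `f` has a computable realizer iff Player II has a computable winning strategy in the
Wadge game of `f`. -/
theorem computable_iff_computable_wadge_winning_II (f : Problem) :
    (∃ F : Baire →. Baire, ComputablePF F ∧ Realizes F f) ↔
      ∃ σ : List (List ℕ) → List ℕ, Computable σ ∧ WadgeWinningII f σ := by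
  exact ⟨wadge_of_computable, computable_of_wadge⟩
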